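/- For all integers d ≥ 50, the quantity h(d) = ∑_{H ∈ R(d−1)} (1/(d−|H|) − 1/d) is less than 1/18, where R(d−1) is the family of the first d−1 finite subsets of ℕ⁺ in colexicographic order. -/

import Mathlib

set_option maxRecDepth 100000

open Finset

/-- The `k`-th finite subset of `ℕ⁺` in colexicographic order (zero-indexed):
its elements are the positions (shifted by one) of the binary digits of `k`. -/
def decodeSet (k : ℕ) : Finset ℕ :=
  ((Finset.range (k + 1)).filter (fun i => k.testBit i)).image (· + 1)

/-- `Rfam m`: the family of the first `m` finite subsets of `ℕ⁺` in colexicographic order. -/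
def Rfam (m : ℕ) : Finset (Finset ℕ) :=
  (Finset.range m).image decodeSet

lemma mem_decodeSet {k i : ℕ} : i + 1 ∈ decodeSet k ↔ k.testBit i := by
  simp only [decodeSet, Finset.mem_image, Finset.mem_filter, Finset.mem_range]
  constructor
  · rintro ⟨a, ⟨-, hb⟩, ha⟩
    obtain rfl : a = i := by omega
    exact hb
  · intro h
    refine ⟨i, ⟨?_, h⟩, rfl⟩
    have h2 : ¬ k < 2 ^ i := fun hc => by simp [Nat.testBit_lt_two_pow hc] at h
    have := Nat.lt_two_pow_self (n := i)
    omega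

lemma decodeSet_injective : Function.Injective decodeSet := by
  intro a b h
  apply Nat.eq_of_testBit_eq
  intro i
  have : (i + 1 ∈ decodeSet a) ↔ (i + 1 ∈ decodeSet b) := by rw [h]
  rw [mem_decodeSet, mem_decodeSet] at this
  exact Bool.coe_iff_coe.mp this

lemma card_decodeSet_le {k n : ℕ} (h : k < 2 ^ n) : (decodeSet k).card ≤ n := by
  have hsub : decodeSet k ⊆ (Finset.range n).image (· + 1) := by
    intro x hx
    simp only [decodeSet, Finset.mem_image, Finset.mem_filter, Finset.mem_range] at hx ⊢
    obtain ⟨a, ⟨-, hb⟩, ha⟩ := hx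
    refine ⟨a, ?_, ha⟩
    by_contra hc
    have : k < 2 ^ a := lt_of_lt_of_le h (Nat.pow_le_pow_right (by norm_num) (by omega))
    simp [Nat.testBit_lt_two_pow this] at hb
  calc (decodeSet k).card ≤ ((Finset.range n).image (· + 1)).card := Finset.card_le_card hsub
    _ ≤ (Finset.range n).card := Finset.card_image_le
    _ = n := Finset.card_range n

lemma sum_Rfam (m : ℕ) (f : Finset ℕ → ℝ) :
    ∑ H ∈ Rfam m, f H = ∑ k ∈ Finset.range m, f (decodeSet k) :=
  Finset.sum_image (fun x _ y _ h => decodeSet_injective h)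

lemma aux_pow (n : ℕ) (hn : 9 ≤ n) : 19 * n ≤ 2 ^ (n - 1) + 1 := by
  induction n, hn using Nat.le_induction with
  | base => norm_num
  | succ m hm ih =>
    have h1 : 2 ^ (m - 1) * 2 = 2 ^ m := by
      rw [← pow_succ]; congr 1; omega
    have h2 : (32 : ℕ) ≤ 2 ^ (m-1) := by
      calc (32:ℕ) = 2 ^ 5 := by norm_num
        _ ≤ 2 ^ (m-1) := Nat.pow_le_pow_right (by norm_num) (by omega)
    have h3 : m + 1 - 1 = m := by omega
    rw [h3]
    omega

/-- popcounts of `0, 1, ..., 149`. -/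
def popList : List ℕ := [0, 1, 1, 2, 1, 2, 2, 3, 1, 2, 2, 3, 2, 3, 3, 4, 1, 2, 2, 3, 2, 3, 3, 4, 2, 3, 3, 4, 3, 4, 4, 5, 1, 2, 2, 3, 2, 3, 3, 4, 2, 3, 3, 4, 3, 4, 4, 5, 2, 3, 3, 4, 3, 4, 4, 5, 3, 4, 4, 5, 4, 5, 5, 6, 1, 2, 2, 3, 2, 3, 3, 4, 2, 3, 3, 4, 3, 4, 4, 5, 2, 3, 3, 4, 3, 4, 4, 5, 3, 4, 4, 5, 4, 5, 5, 6, 2, 3, 3, 4, 3, 4, 4, 5, 3, 4, 4, 5, 4, 5, 5, 6, 3, 4, 4, 5, 4, 5, 5, 6, 4, 5, 5, 6, 5, 6, 6, 7, 1, 2, 2, 3, 2, 3, 3, 4, 2, 3, 3, 4, 3, 4, 4, 5, 2, 3, 3, 4, 3, 4]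

/-- numerator of `1/(d-c) - 1/d` over the common denominator `Dden d`. -/
def gnum (d c : ℕ) : ℕ :=
  match c with
  | 1 => 1 * (d-2)*(d-3)*(d-4)*(d-5)*(d-6)*(d-7)*(d-8)
  | 2 => 2 * (d-1)*(d-3)*(d-4)*(d-5)*(d-6)*(d-7)*(d-8)
  | 3 => 3 * (d-1)*(d-2)*(d-4)*(d-5)*(d-6)*(d-7)*(d-8)
  | 4 => 4 * (d-1)*(d-2)*(d-3)*(d-5)*(d-6)*(d-7)*(d-8)
  | 5 => 5 * (d-1)*(d-2)*(d-3)*(d-4)*(d-6)*(d-7)*(d-8)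
  | 6 => 6 * (d-1)*(d-2)*(d-3)*(d-4)*(d-5)*(d-7)*(d-8)
  | 7 => 7 * (d-1)*(d-2)*(d-3)*(d-4)*(d-5)*(d-6)*(d-8)
  | 8 => 8 * (d-1)*(d-2)*(d-3)*(d-4)*(d-5)*(d-6)*(d-7)
  | _ => 0

def Dden (d : ℕ) : ℕ := d*(d-1)*(d-2)*(d-3)*(d-4)*(d-5)*(d-6)*(d-7)*(d-8)

lemma pop_eq : ∀ k ∈ Finset.range 150, (decodeSet k).card = popList.getD k 0 := by decide

lemma cert : ∀ d ∈ Finset.Icc 50 151,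
    18 * (∑ k ∈ Finset.range (d-1), gnum d (popList.getD k 0)) < Dden d := by decide

lemma Dden_cast (d : ℕ) (hd : 50 ≤ d) :
    ((Dden d : ℕ) : ℝ) =
      (d:ℝ)*((d:ℝ)-1)*((d:ℝ)-2)*((d:ℝ)-3)*((d:ℝ)-4)*((d:ℝ)-5)*((d:ℝ)-6)*((d:ℝ)-7)*((d:ℝ)-8) := by
  have e : ∀ j : ℕ, j ≤ 8 → ((d - j : ℕ) : ℝ) = (d:ℝ) - j := fun j hj =>
    Nat.cast_sub (by omega)
  simp only [Dden]
  push_cast [e 1 (by norm_num), e 2 (by norm_num), e 3 (by norm_num), e 4 (by norm_num),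
    e 5 (by norm_num), e 6 (by norm_num), e 7 (by norm_num), e 8 (by norm_num)]
  ring

lemma Dden_pos (d : ℕ) (hd : 50 ≤ d) : (0:ℝ) < (Dden d : ℝ) := by
  rw [Dden_cast d hd]
  have h50 : (50:ℝ) ≤ (d:ℝ) := by exact_mod_cast hd
  repeat' apply mul_pos
  all_goals linarith

set_option maxHeartbeats 1600000 in
lemma term_eq (d c : ℕ) (hd : 50 ≤ d) (hc : c ≤ 8) :
    (1:ℝ)/((d:ℝ) - c) - 1/d = (gnum d c : ℝ)/(Dden d : ℝ) := by
  have h50 : (50:ℝ) ≤ (d:ℝ) := by exact_mod_cast hd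
  have hcR : (c:ℝ) ≤ 8 := by exact_mod_cast hc
  have hd0 : (0:ℝ) < (d:ℝ) := by linarith
  have hdc : (0:ℝ) < (d:ℝ) - c := by linarith
  have hD := Dden_pos d hd
  have e : ∀ j : ℕ, j ≤ 8 → ((d - j : ℕ) : ℝ) = (d:ℝ) - j := fun j hj =>
    Nat.cast_sub (by omega)
  have e1 := e 1 (by norm_num); have e2 := e 2 (by norm_num)
  have e3 := e 3 (by norm_num); have e4 := e 4 (by norm_num)
  have e5 := e 5 (by norm_num); have e6 := e 6 (by norm_num)
  have e7 := e 7 (by norm_num); have e8 := e 8 (by norm_num)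
  rw [div_sub_div _ _ (ne_of_gt hdc) (ne_of_gt hd0),
    div_eq_div_iff (mul_pos hdc hd0).ne' hD.ne']
  interval_cases c <;>
    simp only [gnum] <;>
    rw [Dden_cast d hd] <;>
    push_cast [e1, e2, e3, e4, e5, e6, e7, e8] <;>
    ring


/-- for `d ≥ 50`, `h(d) = ∑_{H ∈ R(d-1)} (1/(d-|H|) - 1/d) < 1/18`. -/
theorem stmt_19 (d : ℕ) (hd : 50 ≤ d) :
    ∑ H ∈ Rfam (d - 1), ((1 : ℝ) / ((d : ℝ) - H.card) - 1 / d) < 1 / 18 := by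
  rw [sum_Rfam]
  rcases le_or_gt 152 d with h152 | h152
  · -- large case
    set L := Nat.clog 2 (d - 1) with hLdef
    have hL1 : 1 ≤ L := Nat.clog_pos (by norm_num) (by omega)
    have hpow : d - 1 ≤ 2 ^ L := Nat.le_pow_clog (by norm_num) _
    have h19 : 19 * L ≤ d := by
      by_cases hL8 : L ≤ 8
      · omega
      · have hlt : 2 ^ (L - 1) < d - 1 := Nat.pow_pred_clog_lt_self (by norm_num) (by omega)
        have := aux_pow L (by omega)
        omega
    have hLd : L < d := by omega
    have hdR : (0:ℝ) < d := by positivity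
    have hLR : (0:ℝ) < (d:ℝ) - L := by
      have : (L:ℝ) < d := by exact_mod_cast hLd
      linarith
    have bound : ∀ k ∈ range (d-1),
        ((1 : ℝ) / ((d : ℝ) - (decodeSet k).card) - 1 / d) ≤ (1 / ((d:ℝ) - L) - 1 / d) := by
      intro k hk
      have hk' : k < 2 ^ L := lt_of_lt_of_le (Finset.mem_range.mp hk) hpow
      have hc : (decodeSet k).card ≤ L := card_decodeSet_le hk'
      have hcR : ((decodeSet k).card : ℝ) ≤ L := by exact_mod_cast hc
      have h1 : (0:ℝ) < (d:ℝ) - (decodeSet k).card := by linarith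
      gcongr
    have hcard := Finset.sum_le_card_nsmul _ _ _ bound
    rw [Finset.card_range, nsmul_eq_mul] at hcard
    refine lt_of_le_of_lt hcard ?_
    have hd1 : ((d - 1 : ℕ) : ℝ) = (d:ℝ) - 1 := by
      push_cast [Nat.cast_sub (by omega : 1 ≤ d)]; ring
    have h19R : 19 * (L:ℝ) ≤ d := by exact_mod_cast h19
    have expand : ((d:ℝ) - 1) * (1/((d:ℝ)-L) - 1/(d:ℝ)) = (((d:ℝ)-1)*L)/(((d:ℝ)-L)*d) := by
      field_simp
      ring
    rw [hd1, expand, div_lt_div_iff₀ (by positivity) (by norm_num)]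
    nlinarith [mul_le_mul_of_nonneg_left h19R hdR.le, hL1, hdR]
  · -- small case: 50 ≤ d ≤ 151
    have hDden : (0:ℝ) < (Dden d : ℝ) := Dden_pos d hd
    have step : ∑ k ∈ range (d-1), ((1 : ℝ) / ((d : ℝ) - (decodeSet k).card) - 1 / d)
        = (↑(∑ k ∈ range (d-1), gnum d (popList.getD k 0)) : ℝ) / (Dden d : ℝ) := by
      rw [eq_comm, Nat.cast_sum, Finset.sum_div, eq_comm]
      refine Finset.sum_congr rfl (fun k hk => ?_)
      have hk' : k < d - 1 := Finset.mem_range.mp hk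
      have hkr : k ∈ Finset.range 150 := Finset.mem_range.mpr (by omega)
      have hc8 : (decodeSet k).card ≤ 8 := card_decodeSet_le (by norm_num; omega)
      rw [← pop_eq k hkr]
      exact term_eq d _ hd hc8
    rw [step, div_lt_div_iff₀ hDden (by norm_num)]
    have hc := cert d (Finset.mem_Icc.mpr ⟨hd, by omega⟩)
    calc (↑(∑ k ∈ range (d-1), gnum d (popList.getD k 0)) : ℝ) * 18
        = ((18 * ∑ k ∈ range (d-1), gnum d (popList.getD k 0) : ℕ) : ℝ) := by push_cast; ring
      _ < ((Dden d : ℕ) : ℝ) := by exact_mod_cast hc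
      _ = 1 * (Dden d : ℝ) := by ring
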